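/- Let G be a connected simple graph on a finite vertex type V with n vertices and m edges. The ZMod 2-vector space of all vectors x : Sym2 V → ZMod 2 that vanish outside the edge set of G and satisfy that every vertex is incident to an even number of edges e with x e = 1 (equivalently, the incidence matrix of G over ZMod 2 applied to x is zero) has dimension m − n + 1. -/

import Mathlib

open Matrix

/-- The cycle space of `G` over `ZMod 2`: vectors vanishing outside the edge set of `G`
that lie in the kernel of the incidence matrix (equivalently, every vertex is incident to
an even number of edges carrying a `1`). -/
def cycleSpace {V : Type*} [Fintype V] [DecidableEq V] (G : SimpleGraph V) :
    Submodule (ZMod 2) (Sym2 V → ZMod 2) where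
  carrier := {x | (∀ e, e ∉ G.edgeSet → x e = 0) ∧ (by classical exact G.incMatrix (ZMod 2)) *ᵥ x = 0}
  add_mem' := by
    rintro a b ⟨ha1, ha2⟩ ⟨hb1, hb2⟩
    refine ⟨fun e he => ?_, ?_⟩
    · simp [Pi.add_apply, ha1 e he, hb1 e he]
    · rw [Matrix.mulVec_add, ha2, hb2, add_zero]
  zero_mem' := ⟨fun e _ => rfl, by rw [Matrix.mulVec_zero]⟩
  smul_mem' := by
    rintro c x ⟨hx1, hx2⟩
    refine ⟨fun e he => ?_, ?_⟩
    · simp [Pi.smul_apply, hx1 e he]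
    · rw [Matrix.mulVec_smul, hx2, smul_zero]

section Aux

variable {V : Type*} [Fintype V] [DecidableEq V] (G : SimpleGraph V) [DecidableRel G.Adj]

/-- The entries of an incidence-matrix column for an actual edge `s(u,w)`. -/
lemma incMatrix_apply_edge {u w : V} (h : G.Adj u w) (v : V) :
    G.incMatrix (ZMod 2) v s(u, w) =
      (if v = u then (1 : ZMod 2) else 0) + (if v = w then 1 else 0) := by
  have hne : u ≠ w := h.ne
  by_cases hu : v = u
  · rw [(G.incMatrix_apply_eq_one_iff (R := ZMod 2)).2
      (by rw [hu]; exact (G.mem_incidenceSet u w).2 h)]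
    simp [hu, hne]
  · by_cases hw : v = w
    · subst hw
      rw [(G.incMatrix_apply_eq_one_iff (R := ZMod 2)).2
        (by rw [Sym2.eq_swap]; exact (G.mem_incidenceSet v u).2 h.symm)]
      simp [hu]
    · rw [(G.incMatrix_apply_eq_zero_iff (R := ZMod 2)).2 (by
        intro hc
        rcases (Sym2.mem_iff).1 hc.2 with h1 | h1 <;> [exact hu h1; exact hw h1])]
      simp [hu, hw]

/-- The column of the incidence matrix corresponding to an edge `s(u,w)`. -/
lemma incMatrix_mulVec_single {u w : V} (h : G.Adj u w) :
    G.incMatrix (ZMod 2) *ᵥ Pi.single s(u, w) (1 : ZMod 2) =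
      Pi.single u 1 + Pi.single w 1 := by
  funext v
  simp only [Matrix.mulVec_single_one, Matrix.col_apply]
  rw [incMatrix_apply_edge G h v]
  simp [Pi.single_apply]

/-- Each column of the incidence matrix (for an actual edge) sums to `0` over `ZMod 2`. -/
lemma sum_incMatrix_col {e : Sym2 V} (he : e ∈ G.edgeSet) :
    ∑ v : V, G.incMatrix (ZMod 2) v e = 0 := by
  induction e with
  | _ u w =>
    have h : G.Adj u w := he
    rw [Finset.sum_congr rfl (fun v _ => incMatrix_apply_edge G h v),
      Finset.sum_add_distrib]
    simp only [Finset.sum_ite_eq', Finset.mem_univ, if_true]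
    decide

end Aux

/-- For a connected graph with `n` vertices and `m` edges, the cycle space over `ZMod 2`
has dimension `m - n + 1`. -/
theorem finrank_cycleSpace {V : Type*} [Fintype V] [DecidableEq V]
    (G : SimpleGraph V) (hG : G.Connected) :
    (Module.finrank (ZMod 2) (cycleSpace G) : ℤ) =
      (G.edgeSet.ncard : ℤ) - Fintype.card V + 1 := by
  classical
  haveI : Fintype G.edgeSet := G.edgeSet.toFinite.fintype
  set K := ZMod 2
  have addself : ∀ z : V → K, z + z = 0 := by
    intro z; funext v
    exact CharTwo.add_self_eq_zero (z v)
  -- The space of functions supported on edges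
  let S : Submodule K (Sym2 V → K) :=
    { carrier := {x | ∀ e ∉ G.edgeSet, x e = 0}
      add_mem' := fun ha hb e he => by simp [ha e he, hb e he]
      zero_mem' := fun e _ => rfl
      smul_mem' := fun c x hx e he => by simp [hx e he] }
  -- S is isomorphic to functions on the edge set
  let r : S →ₗ[K] (G.edgeSet → K) :=
    LinearMap.pi (fun e => LinearMap.proj e.1 ∘ₗ S.subtype)
  have hr : Function.Bijective r := by
    constructor
    · intro x y hxy
      ext e
      by_cases he : e ∈ G.edgeSet
      · exact congrFun hxy ⟨e, he⟩
      · rw [x.2 e he, y.2 e he]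
    · intro y
      refine ⟨⟨fun e => if h : e ∈ G.edgeSet then y ⟨e, h⟩ else 0,
        fun e he => dif_neg he⟩, ?_⟩
      funext e
      simp [r, e.2]
  have hSrank : Module.finrank K S = G.edgeSet.ncard := by
    rw [(LinearEquiv.ofBijective r hr).finrank_eq,
      Module.finrank_fintype_fun_eq_card, ← Nat.card_eq_fintype_card,
      Nat.card_coe_set_eq]
  haveI : Module.Finite K S := Module.Finite.of_surjective
    (LinearEquiv.ofBijective r hr).symm.toLinearMap
    (LinearEquiv.ofBijective r hr).symm.surjective
  -- The boundary map
  let φ : S →ₗ[K] (V → K) := (Matrix.mulVecLin (G.incMatrix K)) ∘ₗ S.subtype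
  -- cycleSpace is isomorphic to ker φ
  have hCyc : Module.finrank K (cycleSpace G) = Module.finrank K (LinearMap.ker φ) := by
    refine LinearEquiv.finrank_eq ?_
    exact
      { toFun := fun x => ⟨⟨x.1, x.2.1⟩, x.2.2⟩
        invFun := fun y => ⟨y.1.1, y.1.2, y.2⟩
        map_add' := fun x y => rfl
        map_smul' := fun c x => rfl
        left_inv := fun x => rfl
        right_inv := fun y => rfl }
  -- The sum functional
  let σ : (V → K) →ₗ[K] K := ∑ v : V, LinearMap.proj v
  have hσ : ∀ y : V → K, σ y = ∑ v : V, y v := by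
    intro y; simp [σ]
  obtain ⟨v₀⟩ := hG.nonempty
  have hσsurj : Function.Surjective σ := by
    intro c
    refine ⟨Pi.single v₀ c, ?_⟩
    rw [hσ]
    simp
  -- range φ = ker σ
  have hrange : LinearMap.range φ = LinearMap.ker σ := by
    apply le_antisymm
    · rintro _ ⟨x, rfl⟩
      rw [LinearMap.mem_ker, hσ]
      have hφ : ∀ v : V, φ x v = ∑ e : Sym2 V, G.incMatrix K v e * x.1 e := fun v => rfl
      calc ∑ v : V, φ x v = ∑ v : V, ∑ e : Sym2 V, G.incMatrix K v e * x.1 e := by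
            simp_rw [hφ]
        _ = ∑ e : Sym2 V, (∑ v : V, G.incMatrix K v e) * x.1 e := by
            rw [Finset.sum_comm]; exact Finset.sum_congr rfl (fun e _ => (Finset.sum_mul _ _ _).symm)
        _ = 0 := by
            apply Finset.sum_eq_zero
            intro e _
            by_cases he : e ∈ G.edgeSet
            · rw [sum_incMatrix_col G he, zero_mul]
            · rw [x.2 e he, mul_zero]
    · -- pairs of single vectors are in the range
      have pair_mem : ∀ u w : V, G.Reachable u w →
          (Pi.single u 1 + Pi.single w 1 : V → K) ∈ LinearMap.range φ := by
        intro u w h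
        obtain ⟨p⟩ := h
        induction p with
        | nil =>
          rw [addself]
          exact zero_mem _
        | @cons u t w hadj p ih =>
          have h1 : (Pi.single u 1 + Pi.single t 1 : V → K) ∈ LinearMap.range φ := by
            refine ⟨⟨Pi.single s(u, t) 1, fun e he => ?_⟩, ?_⟩
            · rw [Pi.single_apply, if_neg]
              intro hc; exact he (hc ▸ hadj)
            · show G.incMatrix K *ᵥ Pi.single s(u, t) 1 = _
              exact incMatrix_mulVec_single G hadj
          have key : (Pi.single u 1 + Pi.single w 1 : V → K) =
              (Pi.single u 1 + Pi.single t 1) + (Pi.single t 1 + Pi.single w 1) := by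
            calc (Pi.single u 1 + Pi.single w 1 : V → K)
                = Pi.single u 1 + (0 + Pi.single w 1) := by rw [zero_add]
              _ = Pi.single u 1 + ((Pi.single t 1 + Pi.single t 1) + Pi.single w 1) := by
                  rw [addself]
              _ = (Pi.single u 1 + Pi.single t 1) + (Pi.single t 1 + Pi.single w 1) := by
                  abel
          rw [key]
          exact add_mem h1 ih
      intro y hy
      rw [LinearMap.mem_ker, hσ] at hy
      have hsingle : ∀ v : V, y v • (Pi.single v 1 : V → K) = Pi.single v (y v) := by
        intro v; funext x
        by_cases h : x = v <;>
          simp [Pi.single_apply, h, Pi.smul_apply, smul_eq_mul]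
      have hdecomp : y = ∑ v : V, y v • (Pi.single v 1 + Pi.single v₀ 1 : V → K) := by
        have hterm : ∀ v : V, y v • (Pi.single v 1 + Pi.single v₀ 1 : V → K) =
            Pi.single v (y v) + y v • (Pi.single v₀ 1 : V → K) := by
          intro v
          rw [smul_add, hsingle]
        simp_rw [hterm]
        rw [Finset.sum_add_distrib, Finset.univ_sum_single, ← Finset.sum_smul, hy,
          zero_smul, add_zero]
      rw [hdecomp]
      exact Submodule.sum_mem _ (fun v _ =>
        Submodule.smul_mem _ _ (pair_mem v v₀ (hG v v₀)))
  -- rank-nullity computations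
  have rn1 : Module.finrank K (LinearMap.range φ) + Module.finrank K (LinearMap.ker φ)
      = Module.finrank K S := LinearMap.finrank_range_add_finrank_ker φ
  have rn2 : Module.finrank K (LinearMap.range σ) + Module.finrank K (LinearMap.ker σ)
      = Fintype.card V := by
    rw [LinearMap.finrank_range_add_finrank_ker σ, Module.finrank_fintype_fun_eq_card]
  have hrσ : Module.finrank K (LinearMap.range σ) = 1 := by
    rw [LinearMap.range_eq_top.2 hσsurj, finrank_top, Module.finrank_self]
  rw [hrσ] at rn2
  rw [hrange, hSrank] at rn1
  rw [hCyc]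
  omega
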